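/- Let f: ℝⁿ → ℝ be convex with nonempty level set C := f⁻¹((-∞,0]). Let {x_i} be a sequence with x_0 given, where at each step y_i ∈ ∂f(x_i) (if f(x_i) > 0 then y_i ≠ 0), and x_{i+1} is the projection of x_i onto the intersection F_i of a finite collection of halfspaces of the form {x : f(x_k) + ⟨y_k, x - x_k⟩ ≤ 0}, with k = i among them. Then {x_i} converges to a point x̄ with f(x̄) ≤ 0. -/

import Mathlib

open RealInnerProductSpace Filter

/-- The convex subdifferential of `f` at `x`. -/
def subdiff {n : ℕ} (f : EuclideanSpace ℝ (Fin n) → ℝ) (x : EuclideanSpace ℝ (Fin n)) :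
    Set (EuclideanSpace ℝ (Fin n)) :=
  {y | ∀ z, f x + ⟪y, z - x⟫ ≤ f z}


open RealInnerProductSpace in
private lemma proj_inner_le_zero {E : Type*} [NormedAddCommGroup E] [InnerProductSpace ℝ E]
    {K : Set E} (hK : Convex ℝ K) {u p : E} (hp : p ∈ K)
    (hmin : ∀ z ∈ K, ‖u - p‖ ≤ ‖u - z‖) : ∀ z ∈ K, ⟪u - p, z - p⟫ ≤ 0 := by
  haveI : Nonempty K := ⟨⟨p, hp⟩⟩
  have heq : ‖u - p‖ = ⨅ w : K, ‖u - w‖ := by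
    refine le_antisymm (le_ciInf fun w => hmin w w.2) ?_
    have hb : BddBelow (Set.range fun w : K => ‖u - (w : E)‖) :=
      ⟨0, by rintro b ⟨w, rfl⟩; exact norm_nonneg _⟩
    exact ciInf_le hb ⟨p, hp⟩
  exact (norm_eq_iInf_iff_real_inner_le_zero hK hp).1 heq

set_option maxHeartbeats 1000000 in
/-- Basic convergence of the SGQP algorithm for the convex inequality problem:
projecting successively onto intersections of subgradient cut halfspaces
(always including the current one) converges to a solution. -/
theorem SGQP_basic_convergence
    {n : ℕ} (f : EuclideanSpace ℝ (Fin n) → ℝ)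
    (hconv : ConvexOn ℝ Set.univ f)
    (hfeas : {x | f x ≤ 0}.Nonempty)
    (x y : ℕ → EuclideanSpace ℝ (Fin n))
    (S : ℕ → Finset ℕ)
    (hS_mem : ∀ i, i ∈ S i) (hS_le : ∀ i, ∀ k ∈ S i, k ≤ i)
    (hy : ∀ i, y i ∈ subdiff f (x i))
    (hy_ne : ∀ i, 0 < f (x i) → y i ≠ 0)
    (F : ℕ → Set (EuclideanSpace ℝ (Fin n)))
    (hF : ∀ i, F i = ⋂ k ∈ S i, {z | f (x k) + ⟪y k, z - x k⟫ ≤ 0})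
    (hproj_mem : ∀ i, x (i + 1) ∈ F i)
    (hproj_min : ∀ i, ∀ z ∈ F i, ‖x i - x (i + 1)‖ ≤ ‖x i - z‖) :
    ∃ xbar, Tendsto x atTop (nhds xbar) ∧ f xbar ≤ 0 := by
  obtain ⟨c, hc⟩ := hfeas
  have hc : f c ≤ 0 := hc
  -- continuity of f
  have hcont : Continuous f := by
    have h := hconv.continuousOn isOpen_univ
    rwa [continuousOn_univ] at h
  -- any solution lies in every F i
  have hCF : ∀ c', f c' ≤ 0 → ∀ i, c' ∈ F i := by
    intro c' hc' i
    rw [hF]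
    exact Set.mem_iInter₂.2 fun k _ => le_trans (hy k c') hc'
  -- convexity of F i
  have hFconv : ∀ i, Convex ℝ (F i) := by
    intro i
    rw [hF]
    refine convex_iInter fun k => convex_iInter fun _ => ?_
    have heq : {z : EuclideanSpace ℝ (Fin n) | f (x k) + ⟪y k, z - x k⟫ ≤ 0}
        = {z : EuclideanSpace ℝ (Fin n) | ⟪y k, z⟫ ≤ ⟪y k, x k⟫ - f (x k)} := by
      ext z
      simp only [Set.mem_setOf_eq, inner_sub_right]
      constructor <;> intro h <;> linarith
    rw [heq]
    exact convex_halfSpace_le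
      ⟨fun a b => inner_add_right _ _ _, fun r a => real_inner_smul_right _ _ _⟩ _
  -- variational characterization of the projection
  have hproj : ∀ i, ∀ z ∈ F i, ⟪x i - x (i+1), z - x (i+1)⟫ ≤ 0 := by
    intro i
    exact proj_inner_le_zero (hFconv i) (hproj_mem i) (hproj_min i)
  -- Fejér monotonicity
  have fejer : ∀ c', f c' ≤ 0 → ∀ i,
      ‖x (i+1) - c'‖^2 + ‖x i - x (i+1)‖^2 ≤ ‖x i - c'‖^2 := by
    intro c' hc' i
    have h1 := hproj i c' (hCF c' hc' i)
    have h2 : x i - c' = (x i - x (i+1)) + (x (i+1) - c') := by abel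
    have h3 : ‖x i - c'‖^2
        = ‖x i - x (i+1)‖^2 + 2*⟪x i - x (i+1), x (i+1) - c'⟫ + ‖x (i+1) - c'‖^2 := by
      rw [h2, norm_add_sq_real]
    have h4 : ⟪x i - x (i+1), x (i+1) - c'⟫ = -⟪x i - x (i+1), c' - x (i+1)⟫ := by
      rw [← inner_neg_right]; congr 1; abel
    linarith
  -- norms to any solution are antitone
  have norm_anti : ∀ c', f c' ≤ 0 → Antitone (fun i => ‖x i - c'‖) := by
    intro c' hc'
    refine antitone_nat_of_succ_le fun i => ?_
    have h := fejer c' hc' i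
    nlinarith [norm_nonneg (x (i+1) - c'), norm_nonneg (x i - c'),
      sq_nonneg (‖x i - x (i+1)‖)]
  -- boundedness
  set R : ℝ := ‖x 0 - c‖ + ‖c‖ with hR
  have hbound : ∀ i, ‖x i‖ ≤ R := by
    intro i
    calc ‖x i‖ = ‖(x i - c) + c‖ := by congr 1; abel
    _ ≤ ‖x i - c‖ + ‖c‖ := norm_add_le _ _
    _ ≤ ‖x 0 - c‖ + ‖c‖ := by
        have := norm_anti c hc (Nat.zero_le i); linarith [this]
  -- steps tend to zero
  have hstep : Tendsto (fun i => ‖x i - x (i+1)‖) atTop (nhds 0) := by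
    have hanti : Antitone (fun i => ‖x i - c‖^2) := fun i j hij => by
      have h := norm_anti c hc hij
      exact pow_le_pow_left₀ (norm_nonneg _) h 2
    have hbdd : BddBelow (Set.range fun i => ‖x i - c‖^2) :=
      ⟨0, by rintro b ⟨i, rfl⟩; positivity⟩
    have hd := tendsto_atTop_ciInf hanti hbdd
    have hd' : Tendsto (fun i => ‖x (i+1) - c‖^2) atTop
        (nhds (⨅ i, ‖x i - c‖^2)) := hd.comp (tendsto_add_atTop_nat 1)
    have hdiff : Tendsto (fun i => ‖x i - c‖^2 - ‖x (i+1) - c‖^2) atTop (nhds 0) := by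
      have := hd.sub hd'
      simpa using this
    have hsq : Tendsto (fun i => ‖x i - x (i+1)‖^2) atTop (nhds 0) := by
      refine squeeze_zero (fun i => by positivity) (fun i => ?_) hdiff
      linarith [fejer c hc i]
    have := (Real.continuous_sqrt.tendsto 0).comp hsq
    simp only [Function.comp_def, Real.sqrt_zero] at this
    convert this using 2 with i
    rw [Real.sqrt_sq (norm_nonneg _)]
  -- convergent subsequence
  obtain ⟨xbar, -, φ, hφ, hlim⟩ :=
    (isCompact_closedBall (0 : EuclideanSpace ℝ (Fin n)) R).tendsto_subseq
      (fun i => mem_closedBall_zero_iff.2 (hbound i))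
  -- bounds on f over a compact ball
  have hR0 : (0:ℝ) ≤ R := le_trans (norm_nonneg _) (hbound 0)
  have hball_ne : (Metric.closedBall (0 : EuclideanSpace ℝ (Fin n)) (R+1)).Nonempty :=
    ⟨0, by simp; linarith⟩
  obtain ⟨zM, -, hM'⟩ := (isCompact_closedBall (0 : EuclideanSpace ℝ (Fin n)) (R+1)).exists_isMaxOn
    hball_ne hcont.continuousOn
  obtain ⟨zm, -, hm'⟩ := (isCompact_closedBall (0 : EuclideanSpace ℝ (Fin n)) (R+1)).exists_isMinOn
    hball_ne hcont.continuousOn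
  have hM : ∀ z ∈ Metric.closedBall (0 : EuclideanSpace ℝ (Fin n)) (R+1), f z ≤ f zM :=
    fun z hz => hM' hz
  have hm : ∀ z ∈ Metric.closedBall (0 : EuclideanSpace ℝ (Fin n)) (R+1), f zm ≤ f z :=
    fun z hz => hm' hz
  have hxK : ∀ i, x i ∈ Metric.closedBall (0 : EuclideanSpace ℝ (Fin n)) (R+1) := by
    intro i
    rw [mem_closedBall_zero_iff]
    linarith [hbound i]
  -- bound on subgradients
  have ybound : ∀ i, ‖y i‖ ≤ f zM - f zm := by
    intro i
    by_cases h0 : y i = 0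
    · rw [h0, norm_zero]
      linarith [hm (x i) (hxK i), hM (x i) (hxK i)]
    · have hyn : ‖y i‖ ≠ 0 := norm_ne_zero_iff.2 h0
      set z := x i + ‖y i‖⁻¹ • y i with hz
      have hzK : z ∈ Metric.closedBall (0 : EuclideanSpace ℝ (Fin n)) (R+1) := by
        rw [mem_closedBall_zero_iff]
        calc ‖z‖ ≤ ‖x i‖ + ‖‖y i‖⁻¹ • y i‖ := norm_add_le _ _
        _ = ‖x i‖ + 1 := by
            rw [norm_smul, norm_inv, norm_norm, inv_mul_cancel₀ hyn]
        _ ≤ R + 1 := by linarith [hbound i]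
      have hsub := hy i z
      have hip : ⟪y i, z - x i⟫ = ‖y i‖ := by
        rw [hz]
        have : x i + ‖y i‖⁻¹ • y i - x i = ‖y i‖⁻¹ • y i := by abel
        rw [this, real_inner_smul_right, real_inner_self_eq_norm_sq]
        field_simp
      rw [hip] at hsub
      linarith [hm (x i) (hxK i), hM z hzK]
  -- bound on f (x i)
  have fbound : ∀ i, f (x i) ≤ (f zM - f zm) * ‖x i - x (i+1)‖ := by
    intro i
    have hmem : x (i+1) ∈ {z | f (x i) + ⟪y i, z - x i⟫ ≤ 0} := by
      have h := hproj_mem i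
      rw [hF] at h
      exact Set.mem_iInter₂.1 h i (hS_mem i)
    have h1 : f (x i) ≤ ⟪y i, x i - x (i+1)⟫ := by
      have h2 : ⟪y i, x i - x (i+1)⟫ = -⟪y i, x (i+1) - x i⟫ := by
        rw [← inner_neg_right]; congr 1; abel
      have := hmem
      simp only [Set.mem_setOf_eq] at this
      linarith
    calc f (x i) ≤ ⟪y i, x i - x (i+1)⟫ := h1
    _ ≤ ‖y i‖ * ‖x i - x (i+1)‖ := real_inner_le_norm _ _
    _ ≤ (f zM - f zm) * ‖x i - x (i+1)‖ :=
        mul_le_mul_of_nonneg_right (ybound i) (norm_nonneg _)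
  -- f xbar ≤ 0
  have hfxbar : f xbar ≤ 0 := by
    have h1 : Tendsto (fun j => f (x (φ j))) atTop (nhds (f xbar)) :=
      (hcont.tendsto xbar).comp hlim
    have h2 : Tendsto (fun j => (f zM - f zm) * ‖x (φ j) - x (φ j + 1)‖) atTop (nhds 0) := by
      have := (hstep.comp hφ.tendsto_atTop).const_mul (f zM - f zm)
      simpa using this
    exact le_of_tendsto_of_tendsto' h1 h2 (fun j => fbound (φ j))
  -- convergence of the whole sequence
  refine ⟨xbar, ?_, hfxbar⟩
  have hanti := norm_anti xbar hfxbar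
  have hbdd : BddBelow (Set.range fun i => ‖x i - xbar‖) :=
    ⟨0, by rintro b ⟨i, rfl⟩; exact norm_nonneg _⟩
  have htend := tendsto_atTop_ciInf hanti hbdd
  have hsub : Tendsto (fun j => ‖x (φ j) - xbar‖) atTop
      (nhds (⨅ i, ‖x i - xbar‖)) := htend.comp hφ.tendsto_atTop
  have hsub0 : Tendsto (fun j => ‖x (φ j) - xbar‖) atTop (nhds 0) := by
    have := tendsto_iff_norm_sub_tendsto_zero.1 hlim
    simpa [Function.comp_def] using this
  have hL : (⨅ i, ‖x i - xbar‖) = 0 := tendsto_nhds_unique hsub hsub0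
  rw [tendsto_iff_norm_sub_tendsto_zero]
  rwa [hL] at htend
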